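/- For all natural numbers i and k with k ≥ 1 and all complex t, define S_{i,k}(t) = Σ_{i_1+⋯+i_k=i, each i_j ≥ 1} (t−i_1+1)(t−i_1−i_2+1)⋯(t−i+1). Then for k ≤ i, S_{i,k}(t) = (t−i+1) · Σ_{l=0}^{k−1} s(i−1, l+i−k) · C(l+i−k, l) · t^l, where s(·,·) are Stirling numbers of the first kind. -/

import Mathlib

open Finset

/-- `p_{i_1,…,i_k}(t) = (t−i_1+1)(t−i_1−i_2+1)⋯(t−i+1)`, a product over the
partial sums of the list `l = (i_1,…,i_k)`. -/
noncomputable def pProd (l : List ℕ) (t : ℂ) : ℂ :=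
  ∏ j ∈ Finset.range l.length, (t - ((l.take (j + 1)).sum : ℂ) + 1)

/-- `S_{i,k}(t)`: the sum of `p_{i_1,…,i_k}(t)` over all compositions of `i` of length `k`. -/
noncomputable def Spoly (i k : ℕ) (t : ℂ) : ℂ :=
  ∑ c ∈ Finset.univ.filter (fun c : Composition i => c.length = k), pProd c.blocks t

/-- Signed Stirling numbers of the first kind, via
`s(n+1,m) = s(n,m−1) − n·s(n,m)`. -/
def stirling1 : ℕ → ℕ → ℤ
  | 0, 0 => 1
  | 0, _ + 1 => 0
  | n + 1, 0 => -(n : ℤ) * stirling1 n 0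
  | n + 1, m + 1 => stirling1 n m - (n : ℤ) * stirling1 n (m + 1)

open Polynomial

lemma stirling1_eq_zero : ∀ n m : ℕ, n < m → stirling1 n m = 0
  | 0, _ + 1, _ => rfl
  | n + 1, m + 1, h => by
    rw [stirling1, stirling1_eq_zero n m (by omega), stirling1_eq_zero n (m+1) (by omega)]
    ring

lemma stirling_eval (n : ℕ) (y : ℂ) :
    ∏ j ∈ range n, (y - j) = ∑ m ∈ range (n + 1), (stirling1 n m : ℂ) * y ^ m := by
  induction n with
  | zero => simp [stirling1]
  | succ n ih =>
    rw [prod_range_succ, ih]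
    have key : ∑ m ∈ range (n + 2), (stirling1 (n+1) m : ℂ) * y ^ m
        = ∑ m ∈ range (n + 1), ((stirling1 n m : ℂ) - n * stirling1 n (m+1)) * y ^ (m+1)
          + (-(n:ℂ) * stirling1 n 0) := by
      rw [Finset.sum_range_succ']
      congr 1
      · apply Finset.sum_congr rfl
        intro m _
        rw [stirling1]
        push_cast
        ring
      · rw [stirling1]; push_cast; ring
    rw [key]
    have h2 : ∑ m ∈ range (n + 1), ((stirling1 n m : ℂ) - n * stirling1 n (m+1)) * y ^ (m+1)
        = ∑ m ∈ range (n + 1), (stirling1 n m : ℂ) * y ^ (m+1)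
          - (n:ℂ) * ∑ m ∈ range (n + 1), (stirling1 n (m+1) : ℂ) * y ^ (m+1) := by
      rw [Finset.mul_sum, ← Finset.sum_sub_distrib]
      apply Finset.sum_congr rfl; intro m _; ring
    rw [h2]
    have h3 : ∑ m ∈ range (n + 1), (stirling1 n (m+1) : ℂ) * y ^ (m+1)
        = ∑ m ∈ range (n + 1), (stirling1 n m : ℂ) * y ^ m - (stirling1 n 0 : ℂ) := by
      rw [Finset.sum_range_succ, stirling1_eq_zero n (n+1) (by omega),
        Finset.sum_range_succ' (fun m => (stirling1 n m : ℂ) * y ^ m) n]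
      push_cast
      simp

    rw [h3]
    have h4 : ∑ m ∈ range (n + 1), (stirling1 n m : ℂ) * y ^ (m+1)
        = (∑ m ∈ range (n + 1), (stirling1 n m : ℂ) * y ^ m) * y := by
      rw [Finset.sum_mul]; apply Finset.sum_congr rfl; intro m _; ring
    rw [h4]
    ring

lemma stirling_poly (n : ℕ) (t : ℂ) :
    ∏ j ∈ range n, (X + C (t - j)) =
      ∑ m ∈ range (n + 1), C ((stirling1 n m : ℂ)) * (X + C t) ^ m := by
  apply Polynomial.funext
  intro x
  simp only [eval_prod, eval_finset_sum, eval_mul, eval_pow, eval_add, eval_C, eval_X]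
  simp only [show ∀ j : ℕ, x + (t - (j : ℂ)) = x + t - j from fun j => by ring]
  exact stirling_eval n (x + t)

lemma F_eq (i k : ℕ) (hk : 1 ≤ k) (hki : k ≤ i) (t : ℂ) :
    ∑ A ∈ (range (i-1)).powersetCard (k-1), ∏ j ∈ A, (t - (j:ℂ))
      = ∑ l ∈ range k, (stirling1 (i-1) (l+i-k) : ℂ) * ((l+i-k).choose l : ℂ) * t^l := by
  set n := i - 1 with hn
  set d := i - k with hd
  have hdn : d ≤ n := by omega
  have hL : ∑ A ∈ (range n).powersetCard (k-1), ∏ j ∈ A, (t - (j:ℂ))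
      = (∏ j ∈ range n, (X + C (t - (j:ℂ)))).coeff d := by
    rw [Finset.prod_X_add_C_coeff (range n) (fun j => t - (j:ℂ)) (by simpa using hdn)]
    rw [Finset.card_range, show n - d = k - 1 by omega]
  rw [hL, stirling_poly, Polynomial.finset_sum_coeff]
  simp only [Polynomial.coeff_C_mul, Polynomial.coeff_X_add_C_pow]
  have hni : n + 1 = i := by omega
  rw [hni]
  have hsplit : ∑ m ∈ range i, (stirling1 n m : ℂ) * (t ^ (m - d) * (m.choose d : ℂ))
      = ∑ m ∈ Finset.Ico d i, (stirling1 n m : ℂ) * (t ^ (m - d) * (m.choose d : ℂ)) := by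
    rw [Finset.range_eq_Ico, ← Finset.sum_Ico_consecutive _ (Nat.zero_le d) (by omega)]
    have : ∑ m ∈ Finset.Ico 0 d, (stirling1 n m : ℂ) * (t ^ (m - d) * (m.choose d : ℂ)) = 0 := by
      apply Finset.sum_eq_zero
      intro m hm
      simp only [Finset.mem_Ico] at hm
      rw [Nat.choose_eq_zero_of_lt hm.2]
      simp
    rw [this, zero_add]
  rw [hsplit, Finset.sum_Ico_eq_sum_range]
  have hik : i - d = k := by omega
  rw [hik]
  apply Finset.sum_congr rfl
  intro l hl
  have h1 : d + l - d = l := by omega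
  have h2 : l + i - k = d + l := by omega
  have h3 : (d + l).choose d = (d + l).choose l := by
    conv_rhs => rw [← Nat.choose_symm (Nat.le_add_left l d)]
    congr 1
    omega
  rw [h1, h2, h3]
  ring

lemma szlt {N : ℕ} (c : Composition N) {p q : ℕ} (h : p < q) (hq : q ≤ c.length) :
    c.sizeUpTo p < c.sizeUpTo q :=
  lt_of_lt_of_le (c.sizeUpTo_strict_mono (by omega)) (c.monotone_sizeUpTo (by omega))

def bnd {N : ℕ} (c : Composition N) (j : Fin (c.length - 1)) : Fin (N - 1) :=
  ⟨c.sizeUpTo (j + 1) - 1, by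
    have hj := j.isLt
    have h1 : 0 < c.sizeUpTo ((j : ℕ) + 1) := by
      have := szlt c (show 0 < (j : ℕ) + 1 by omega) (by omega)
      simpa using this
    have h2 : c.sizeUpTo ((j : ℕ) + 1) < N := by
      have := szlt c (show (j : ℕ) + 1 < c.length by omega) le_rfl
      rwa [c.sizeUpTo_length] at this
    omega⟩

lemma mem_boundaries_iff {N : ℕ} (c : Composition N) (x : Fin (N + 1)) :
    x ∈ c.boundaries ↔ ∃ j : Fin (c.length + 1), c.sizeUpTo j = x := by
  simp only [Composition.boundaries, Finset.mem_map, Finset.mem_univ, true_and,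
    RelEmbedding.coe_toEmbedding]
  constructor
  · rintro ⟨j, rfl⟩
    exact ⟨j, rfl⟩
  · rintro ⟨j, hj⟩
    refine ⟨j, ?_⟩
    rw [Fin.ext_iff]
    exact hj

lemma Ec_eq {N : ℕ} (c : Composition N) :
    compositionAsSetEquiv N c.toCompositionAsSet = Finset.image (bnd c) Finset.univ := by
  ext a
  have ha := a.isLt
  simp only [compositionAsSetEquiv, Equiv.coe_fn_mk, Set.toFinset_setOf, Finset.mem_filter,
    Finset.mem_univ, true_and, Composition.toCompositionAsSet_boundaries, Finset.mem_image]
  refine Finset.mem_filter.trans ?_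
  simp only [Finset.mem_univ, true_and]
  rw [mem_boundaries_iff]
  constructor
  · rintro ⟨j, hj⟩
    simp only at hj
    have hj1 : (j : ℕ) ≠ 0 := by
      intro h
      rw [show ((j : ℕ)) = 0 from h] at hj
      simp at hj
      omega
    have hjle := j.isLt
    have hj2 : (j : ℕ) < c.length := by
      by_contra h
      have : (j : ℕ) = c.length := by omega
      rw [this, c.sizeUpTo_length] at hj
      omega
    refine ⟨⟨(j : ℕ) - 1, by omega⟩, ?_⟩
    rw [Fin.ext_iff]
    simp only [bnd]
    rw [show ((j : ℕ) - 1) + 1 = (j : ℕ) by omega, hj]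
    omega
  · rintro ⟨j, rfl⟩
    have hj := j.isLt
    have h1 : 0 < c.sizeUpTo ((j : ℕ) + 1) := by
      have := szlt c (show 0 < (j : ℕ) + 1 by omega) (by omega)
      simpa using this
    refine ⟨⟨(j : ℕ) + 1, by omega⟩, ?_⟩
    simp only [bnd]
    omega

lemma bnd_injective {N : ℕ} (c : Composition N) : Function.Injective (bnd c) := by
  intro j1 j2 h
  have h1 := j1.isLt
  have h2 := j2.isLt
  simp only [bnd, Fin.mk.injEq, Fin.ext_iff] at h ⊢
  by_contra hne
  rcases Nat.lt_or_ge (j1 : ℕ) (j2 : ℕ) with hlt | hge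
  · have := szlt c (show (j1 : ℕ) + 1 < (j2 : ℕ) + 1 by omega) (by omega)
    have hp : 0 < c.sizeUpTo ((j1 : ℕ) + 1) := by
      have := szlt c (show 0 < (j1 : ℕ) + 1 by omega) (by omega)
      simpa using this
    omega
  · have hlt2 : (j2 : ℕ) < (j1 : ℕ) := by omega
    have := szlt c (show (j2 : ℕ) + 1 < (j1 : ℕ) + 1 by omega) (by omega)
    have hp : 0 < c.sizeUpTo ((j2 : ℕ) + 1) := by
      have := szlt c (show 0 < (j2 : ℕ) + 1 by omega) (by omega)
      simpa using this
    omega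

lemma card_Ec {N : ℕ} (c : Composition N) :
    (compositionAsSetEquiv N c.toCompositionAsSet).card = c.length - 1 := by
  rw [Ec_eq, Finset.card_image_of_injective _ (bnd_injective c), Finset.card_univ,
    Fintype.card_fin]

lemma prod_Ec {N : ℕ} (c : Composition N) (t : ℂ) :
    ∏ a ∈ compositionAsSetEquiv N c.toCompositionAsSet, (t - ((a : ℕ) : ℂ)) =
      ∏ j ∈ range (c.length - 1), (t - (c.sizeUpTo (j + 1) : ℂ) + 1) := by
  rw [Ec_eq, Finset.prod_image (fun x _ y _ h => bnd_injective c h),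
    ← Fin.prod_univ_eq_prod_range (fun j => (t - (c.sizeUpTo (j + 1) : ℂ) + 1)) (c.length - 1)]
  apply Finset.prod_congr rfl
  intro j _
  have hj := j.isLt
  have h1 : 0 < c.sizeUpTo ((j : ℕ) + 1) := by
    have := szlt c (show 0 < (j : ℕ) + 1 by omega) (by omega)
    simpa using this
  simp only [bnd]
  rw [Nat.cast_sub h1]
  push_cast
  ring

lemma pProd_eq {N : ℕ} (c : Composition N) (t : ℂ) :
    pProd c.blocks t = ∏ j ∈ range c.length, (t - (c.sizeUpTo (j + 1) : ℂ) + 1) := by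
  rw [pProd, Composition.blocks_length]
  rfl

lemma pProd_split {N : ℕ} (c : Composition N) {k : ℕ} (hk : 1 ≤ k) (hc : c.length = k)
    (t : ℂ) :
    pProd c.blocks t =
      (t - (N : ℂ) + 1) * ∏ j ∈ range (k - 1), (t - (c.sizeUpTo (j + 1) : ℂ) + 1) := by
  rw [pProd_eq, hc, show k = (k - 1) + 1 by omega, Finset.prod_range_succ]
  rw [show c.sizeUpTo (k - 1 + 1) = N by rw [show k - 1 + 1 = k by omega, ← hc]; exact c.sizeUpTo_length, Nat.add_sub_cancel]
  ring


theorem stmt0 (i k : ℕ) (hk : 1 ≤ k) (hki : k ≤ i) (t : ℂ) :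
    Spoly i k t =
      (t - (i : ℂ) + 1) *
        ∑ l ∈ Finset.range k,
          (stirling1 (i - 1) (l + i - k) : ℂ) * ((l + i - k).choose l : ℂ) * t ^ l := by
  rw [← F_eq i k hk hki t]
  have hmap : (range (i - 1)).powersetCard (k - 1) =
      ((Finset.univ : Finset (Finset (Fin (i - 1)))).filter (fun s => s.card = k - 1)).map
        (Finset.mapEmbedding Fin.valEmbedding).toEmbedding := by
    rw [show (range (i-1) : Finset ℕ) = Finset.univ.map Fin.valEmbedding by
        rw [Fin.map_valEmbedding_univ, ← Nat.Iio_eq_range],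
      Finset.powersetCard_map]
    congr 1
    ext s
    rw [Finset.mem_powersetCard_univ, Finset.mem_filter]
    simp
  rw [hmap, Finset.sum_map]
  have hprod : ∀ s : Finset (Fin (i - 1)),
      ∏ j ∈ (Finset.mapEmbedding Fin.valEmbedding).toEmbedding s, (t - (j : ℂ))
        = ∏ a ∈ s, (t - ((a : ℕ) : ℂ)) := by
    intro s
    rw [show ((Finset.mapEmbedding Fin.valEmbedding).toEmbedding s : Finset ℕ)
        = s.map Fin.valEmbedding from rfl, Finset.prod_map]
    rfl
  simp only [hprod]
  rw [Finset.mul_sum]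
  set e : Composition i ≃ Finset (Fin (i - 1)) :=
    (compositionEquiv i).trans (compositionAsSetEquiv i) with he
  have hecard : ∀ c : Composition i, (e c).card = c.length - 1 := fun c => card_Ec c
  have hipos : 0 < i := by omega
  rw [Spoly]
  apply Finset.sum_nbij' (fun c => e c) (fun s => e.symm s)
  · intro c hc
    rw [Finset.mem_filter] at hc ⊢
    refine ⟨Finset.mem_univ _, ?_⟩
    rw [hecard, hc.2]
  · intro s hs
    rw [Finset.mem_filter] at hs ⊢
    refine ⟨Finset.mem_univ _, ?_⟩
    have h1 := hecard (e.symm s)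
    rw [Equiv.apply_symm_apply] at h1
    have h2 : 0 < (e.symm s).length := (e.symm s).length_pos_of_pos hipos
    omega
  · intro c _; exact e.symm_apply_apply c
  · intro s _; exact e.apply_symm_apply s
  · intro c hc
    rw [Finset.mem_filter] at hc
    rw [pProd_split c hk hc.2 t]
    congr 1
    rw [show (e c : Finset (Fin (i-1))) = compositionAsSetEquiv i c.toCompositionAsSet from rfl,
      prod_Ec, hc.2]
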